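/- Let t > 0 be real, set α = (1 + √(1+2t))/2, and let z₁, z₂ be real with 0 < z₁ < α and z₂ > 0. Define x = 2z₁²/(2z₁+t) and p = z₂⁴/(z₂⁴ − f_t(z₁)). Then 0 < x < 1, 0 < p < 1, and the Jacobian identity (4z₁(z₁+t)/(2z₁+t)²) · (−4z₂³ f_t(z₁)/(z₂⁴−f_t(z₁))²) · 1/(8 x^{1/2}(1−x)^{1/2}(x+2t)^{1/2} p^{3/4}(1−p)^{1/2}) = 1/(z₂⁴−f_t(z₁))^{3/4} holds, where all fractional powers are the real positive ones. (This is the pointwise form of the pull-back identity τ*(dx∧dp/(8x^{1/2}(1−x)^{1/2}(x+2t)^{1/2}p^{3/4}(1−p)^{1/2})) = dz₁∧dz₂/(z₂⁴−f_t(z₁))^{3/4} for the map τ(z₁,z₂) = (2z₁²/(2z₁+t), z₂⁴/(z₂⁴−f_t(z₁))).) -/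

import Mathlib

private lemma sq_rpow_half {w : ℝ} (hw : 0 ≤ w) : (w ^ 2) ^ ((1:ℝ)/2) = w := by
  rw [← Real.rpow_natCast w 2, ← Real.rpow_mul hw]
  norm_num

private lemma pow4_rpow_34 {w : ℝ} (hw : 0 ≤ w) : (w ^ 4) ^ ((3:ℝ)/4) = w ^ 3 := by
  rw [← Real.rpow_natCast w 4, ← Real.rpow_mul hw]
  norm_num

/-- The pointwise form of the pull-back identity
`τ*(dx∧dp/(8x^{1/2}(1−x)^{1/2}(x+2t)^{1/2}p^{3/4}(1−p)^{1/2})) = dz₁∧dz₂/(z₂⁴−f_t(z₁))^{3/4}`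
for `τ(z₁,z₂) = (2z₁²/(2z₁+t), z₂⁴/(z₂⁴−f_t(z₁)))`, with `f_t(z) = (2z+t)(2z²−2z−t)`. -/
theorem stmt9 (t α z₁ z₂ f x p : ℝ) (ht : 0 < t)
    (hα : α = (1 + Real.sqrt (1 + 2 * t)) / 2)
    (h1 : 0 < z₁) (h2 : z₁ < α) (h3 : 0 < z₂)
    (hf : f = (2 * z₁ + t) * (2 * z₁ ^ 2 - 2 * z₁ - t))
    (hx : x = 2 * z₁ ^ 2 / (2 * z₁ + t))
    (hp : p = z₂ ^ 4 / (z₂ ^ 4 - f)) :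
    (0 < x ∧ x < 1) ∧ (0 < p ∧ p < 1) ∧
    (4 * z₁ * (z₁ + t) / (2 * z₁ + t) ^ 2) *
      (-4 * z₂ ^ 3 * f / (z₂ ^ 4 - f) ^ 2) *
      (1 / (8 * x ^ ((1:ℝ)/2) * (1 - x) ^ ((1:ℝ)/2) * (x + 2 * t) ^ ((1:ℝ)/2) *
        p ^ ((3:ℝ)/4) * (1 - p) ^ ((1:ℝ)/2))) =
      1 / (z₂ ^ 4 - f) ^ ((3:ℝ)/4) := by
  have hA : 0 < 2 * z₁ + t := by linarith
  have hd : (0:ℝ) ≤ 1 + 2 * t := by linarith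
  have hd1 : (1:ℝ) ≤ Real.sqrt (1 + 2 * t) := by
    have := Real.sqrt_le_sqrt (show (1:ℝ) ≤ 1 + 2 * t by linarith)
    rwa [Real.sqrt_one] at this
  have hsq : Real.sqrt (1 + 2 * t) ^ 2 = 1 + 2 * t := Real.sq_sqrt hd
  have hB : 2 * z₁ ^ 2 - 2 * z₁ - t < 0 := by
    have h2' : 2 * z₁ - 1 < Real.sqrt (1 + 2 * t) := by
      rw [hα] at h2; linarith
    nlinarith [mul_pos (show 0 < Real.sqrt (1 + 2 * t) - (2 * z₁ - 1) by linarith)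
      (show 0 < Real.sqrt (1 + 2 * t) + (2 * z₁ - 1) by linarith)]
  have hfneg : f < 0 := by
    rw [hf]; exact mul_neg_of_pos_of_neg hA hB
  have hs : 0 < z₂ ^ 4 - f := by nlinarith [pow_pos h3 4]
  have hx0 : 0 < x := by rw [hx]; positivity
  have hx1 : x < 1 := by rw [hx, div_lt_one hA]; linarith
  have hp0 : 0 < p := by rw [hp]; exact div_pos (pow_pos h3 4) hs
  have hp1 : p < 1 := by rw [hp, div_lt_one hs]; linarith
  refine ⟨⟨hx0, hx1⟩, ⟨hp0, hp1⟩, ?_⟩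
  obtain ⟨q, hq, hq4, e4, hq14⟩ : ∃ q : ℝ, 0 < q ∧ q ^ 4 = z₂ ^ 4 - f ∧
      (z₂ ^ 4 - f) ^ ((3:ℝ)/4) = q ^ 3 ∧ q = (z₂ ^ 4 - f) ^ ((1:ℝ)/4) := by
    refine ⟨(z₂ ^ 4 - f) ^ ((1:ℝ)/4), Real.rpow_pos_of_pos hs _, ?_, ?_, rfl⟩
    · rw [← Real.rpow_natCast ((z₂ ^ 4 - f) ^ ((1:ℝ)/4)) 4, ← Real.rpow_mul hs.le]
      norm_num
    · rw [← Real.rpow_natCast ((z₂ ^ 4 - f) ^ ((1:ℝ)/4)) 3, ← Real.rpow_mul hs.le]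
      norm_num
  obtain ⟨r, hr, hr2⟩ : ∃ r : ℝ, 0 < r ∧ r ^ 2 = -f := by
    refine ⟨(-f) ^ ((1:ℝ)/2), Real.rpow_pos_of_pos (by linarith) _, ?_⟩
    rw [← Real.rpow_natCast ((-f) ^ ((1:ℝ)/2)) 2, ← Real.rpow_mul (by linarith : (0:ℝ) ≤ -f)]
    norm_num
  have hp' : p = (z₂ / q) ^ 4 := by rw [hp, div_pow, hq4]
  have e2 : p ^ ((3:ℝ)/4) = z₂ ^ 3 / q ^ 3 := by
    rw [hp', pow4_rpow_34 (by positivity : (0:ℝ) ≤ z₂ / q), div_pow]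
  have h1p : 1 - p = (r / q ^ 2) ^ 2 := by
    rw [hp, div_pow, ← pow_mul]
    norm_num
    rw [hq4]
    field_simp
    linear_combination -hr2
  have e3 : (1 - p) ^ ((1:ℝ)/2) = r / q ^ 2 := by
    rw [h1p, sq_rpow_half (by positivity : (0:ℝ) ≤ r / q ^ 2)]
  have keyx : x * (1 - x) * (x + 2 * t) =
      (2 * z₁ * (z₁ + t) * r / (2 * z₁ + t) ^ 2) ^ 2 := by
    rw [hx, div_pow, mul_pow (2 * z₁ * (z₁ + t)) r 2, hr2, hf]
    field_simp
    ring
  have e1 : x ^ ((1:ℝ)/2) * (1 - x) ^ ((1:ℝ)/2) * (x + 2 * t) ^ ((1:ℝ)/2) =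
      2 * z₁ * (z₁ + t) * r / (2 * z₁ + t) ^ 2 := by
    rw [← Real.mul_rpow hx0.le (by linarith : (0:ℝ) ≤ 1 - x),
      ← Real.mul_rpow (by nlinarith : (0:ℝ) ≤ x * (1 - x)) (by linarith : (0:ℝ) ≤ x + 2 * t),
      keyx, sq_rpow_half (by positivity)]
  have key : 8 * x ^ ((1:ℝ)/2) * (1 - x) ^ ((1:ℝ)/2) * (x + 2 * t) ^ ((1:ℝ)/2) *
      p ^ ((3:ℝ)/4) * (1 - p) ^ ((1:ℝ)/2) =
      16 * z₁ * (z₁ + t) * r ^ 2 * z₂ ^ 3 / ((2 * z₁ + t) ^ 2 * q ^ 5) := by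
    rw [show 8 * x ^ ((1:ℝ)/2) * (1 - x) ^ ((1:ℝ)/2) * (x + 2 * t) ^ ((1:ℝ)/2) *
        p ^ ((3:ℝ)/4) * (1 - p) ^ ((1:ℝ)/2) =
        8 * (x ^ ((1:ℝ)/2) * (1 - x) ^ ((1:ℝ)/2) * (x + 2 * t) ^ ((1:ℝ)/2)) *
        p ^ ((3:ℝ)/4) * (1 - p) ^ ((1:ℝ)/2) by ring, e1, e2, e3]
    field_simp
    ring
  have hz1t : 0 < z₁ + t := by linarith
  rw [key, e4, show (z₂ ^ 4 - f) ^ 2 = (q ^ 4) ^ 2 by rw [hq4],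
    show f = -r ^ 2 by linarith]
  field_simp
  ring
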